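/- Let k be a field, let 𝔤 be a Lie algebra over k with trivial centre (Z(𝔤) = 0), let R̃ be a commutative associative unital k-algebra, and let R ⊆ R̃ be a k-subspace. If an element x̃ of the Lie algebra 𝔤 ⊗_k R̃ satisfies [x̃, x ⊗ 1] ∈ 𝔤 ⊗_k R for every x ∈ 𝔤 (bracket taken in 𝔤 ⊗_k R̃), then x̃ ∈ 𝔤 ⊗_k R. -/

import Mathlib

open TensorProduct

/-!
Statement 14 (part of Lemma 5.2 of the paper): let `𝔤` be a Lie algebra with trivial
centre over a field `k`, `R̃` a commutative associative unital `k`-algebra and `R ⊆ R̃`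
a `k`-subspace.  If `x̃ ∈ 𝔤 ⊗ R̃` satisfies `[x̃, x ⊗ 1] ∈ 𝔤 ⊗ R` for all `x ∈ 𝔤`,
then `x̃ ∈ 𝔤 ⊗ R`.  (Here the tensor product is written with the scalars on the left,
`R̃ ⊗[k] 𝔤`, and carries its canonical Lie bracket `[s⊗x, s'⊗y] = ss' ⊗ [x,y]`.)
-/

theorem bracket_in_subspace_tensor_implies_membership
    {k : Type*} [Field k]
    {g : Type*} [LieRing g] [LieAlgebra k g]
    -- `𝔤` has trivial centre
    (hZ : ∀ z : g, (∀ x : g, ⁅z, x⁆ = 0) → z = 0)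
    {Rt : Type*} [CommRing Rt] [Algebra k Rt]
    -- a `k`-subspace `R ⊆ R̃`
    (R : Submodule k Rt)
    -- `𝔤 ⊗ R` viewed inside `𝔤 ⊗ R̃`
    (xt : Rt ⊗[k] g)
    (hxt : ∀ x : g, ⁅xt, (1 : Rt) ⊗ₜ[k] x⁆ ∈
      LinearMap.range (TensorProduct.map R.subtype (LinearMap.id (R := k) (M := g)))) :
    xt ∈ LinearMap.range (TensorProduct.map R.subtype (LinearMap.id (R := k) (M := g))) := by
  classical
  -- The range of `map R.subtype id` is the kernel of `rTensor g R.mkQ`.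
  have hker : LinearMap.range (TensorProduct.map R.subtype (LinearMap.id (R := k) (M := g)))
      = LinearMap.ker (LinearMap.rTensor g R.mkQ) := by
    rw [rTensor_mkQ]; rfl
  rw [hker] at hxt ⊢
  rw [LinearMap.mem_ker]
  set y := LinearMap.rTensor g R.mkQ xt with hy
  -- The bracket with `1 ⊗ x` is `lTensor` of minus the adjoint action.
  have hb : ∀ (z : Rt ⊗[k] g) (x : g), ⁅z, (1 : Rt) ⊗ₜ[k] x⁆
      = LinearMap.lTensor Rt (-(LieAlgebra.ad k g x)) z := by
    intro z x
    induction z using TensorProduct.induction_on with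
    | zero => simp
    | tmul r a =>
        rw [LieAlgebra.ExtendScalars.bracket_tmul, mul_one, ← lie_skew a x]
        simp only [LinearMap.lTensor_tmul, LinearMap.neg_apply, LieAlgebra.ad_apply,
          TensorProduct.tmul_neg]
    | add z w hz hw => rw [add_lie, hz, hw, map_add]
  -- rTensor and lTensor commute
  have hcomm : ∀ (f : g →ₗ[k] g) (z : Rt ⊗[k] g),
      LinearMap.rTensor g R.mkQ (LinearMap.lTensor Rt f z)
        = LinearMap.lTensor (Rt ⧸ R) f (LinearMap.rTensor g R.mkQ z) := by
    intro f z
    rw [← LinearMap.comp_apply, LinearMap.rTensor_comp_lTensor,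
      ← LinearMap.lTensor_comp_rTensor, LinearMap.comp_apply]
  have hy0 : ∀ x : g, LinearMap.lTensor (Rt ⧸ R) (-(LieAlgebra.ad k g x)) y = 0 := by
    intro x
    rw [hy, ← hcomm, ← hb]
    exact hxt x
  -- identify `(Rt ⧸ R) ⊗ g` with finsupps via a basis of `Rt ⧸ R`
  let b := Module.Basis.ofVectorSpace k (Rt ⧸ R)
  let e : ((Rt ⧸ R) ⊗[k] g) ≃ₗ[k] (Module.Basis.ofVectorSpaceIndex k (Rt ⧸ R) →₀ g) :=
    (TensorProduct.congr b.repr (LinearEquiv.refl k g)).trans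
      (TensorProduct.finsuppScalarLeft k g _)
  have hei : ∀ (f : g →ₗ[k] g) (z : (Rt ⧸ R) ⊗[k] g) (i),
      e (LinearMap.lTensor _ f z) i = f (e z i) := by
    intro f z i
    induction z using TensorProduct.induction_on with
    | zero => simp
    | tmul q a =>
        simp [e, TensorProduct.finsuppScalarLeft_apply_tmul_apply, map_smul]
    | add z w hz hw => simp [map_add, Finsupp.add_apply, hz, hw]
  have hyi : e y = 0 := by
    ext i
    refine hZ _ (fun x => ?_)
    have := congrArg (fun w => e w i) (hy0 x)
    beta_reduce at this
    rw [hei] at this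
    simpa [neg_eq_zero] using this
  have : y = e.symm (e y) := (e.symm_apply_apply y).symm
  rw [this, hyi, map_zero]
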